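/- (Quaternion linear minimum mean-square error filter.) Let R ∈ ℍ^{n×n} be Hermitian (Rᴴ = R) and positive definite (re(xᴴ R x) > 0 for all nonzero x ∈ ℍ^n), hence invertible, let p ∈ ℍ^n, and let σ_d² ∈ ℝ. Define J : ℍ^n → ℝ by J(w) = re(wᴴ R w − pᴴ w − wᴴ p) + σ_d². Then w̄ = R⁻¹·p is a global minimizer of J: for every w ∈ ℍ^n, J(w̄) ≤ J(w). -/

import Mathlib

open Quaternion Matrix

lemma quat_vecMul_inj (n : ℕ) (R : Matrix (Fin n) (Fin n) ℍ[ℝ])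
    (hR : Rᴴ = R) (hpd : ∀ x : Fin n → ℍ[ℝ], x ≠ 0 → 0 < (star x ⬝ᵥ R.mulVec x).re) :
    ∀ x : Fin n → ℍ[ℝ], R.mulVec x = 0 → x = 0 := by
  intro x hx
  by_contra h
  have := hpd x h
  rw [hx, dotProduct_zero] at this
  simp at this

lemma quat_matrix_isUnit (n : ℕ) (R : Matrix (Fin n) (Fin n) ℍ[ℝ])
    (hR : Rᴴ = R) (hpd : ∀ x : Fin n → ℍ[ℝ], x ≠ 0 → 0 < (star x ⬝ᵥ R.mulVec x).re) :
    ∃ Rinv : Matrix (Fin n) (Fin n) ℍ[ℝ], R * Rinv = 1 ∧ Rinv * R = 1 := by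
  -- vecMul is injective
  have hmv : ∀ x : Fin n → ℍ[ℝ], R.mulVec x = 0 → x = 0 :=
    quat_vecMul_inj n R hR hpd
  have hinj : Function.Injective R.vecMulLinear := by
    rw [← LinearMap.ker_eq_bot, LinearMap.ker_eq_bot']
    intro x hx
    have hx' : x ᵥ* R = 0 := hx
    have h1 : R.mulVec (star x) = 0 := by
      have := Matrix.star_mulVec R (star x)
      rw [star_star, hR, hx'] at this
      have := congrArg star this
      simpa using this
    have := hmv (star x) h1
    simpa using congrArg star this
  have hsurj : Function.Surjective R.vecMulLinear :=
    LinearMap.injective_iff_surjective.mp hinj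
  have hsurj' : Function.Surjective R.vecMul := hsurj
  obtain ⟨B, hB⟩ := Matrix.vecMul_surjective_iff_exists_left_inverse.mp hsurj'
  -- mulVec is surjective
  have hmvsurj : Function.Surjective R.mulVec := by
    intro y
    obtain ⟨z, hz⟩ := hsurj' (star y)
    refine ⟨star z, ?_⟩
    have h3 := Matrix.star_mulVec R (star z)
    rw [star_star, hR] at h3
    have hz' : z ᵥ* R = star y := hz
    rw [hz'] at h3
    have := congrArg star h3
    simpa using this
  obtain ⟨C, hC⟩ := Matrix.mulVec_surjective_iff_exists_right_inverse.mp hmvsurj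
  have hBC : B = C := by
    calc B = B * (R * C) := by rw [hC, mul_one]
    _ = (B * R) * C := by rw [mul_assoc]
    _ = C := by rw [hB, one_mul]
  exact ⟨C, hC, hBC ▸ hB⟩

/-- Quaternion linear minimum mean-square error filter: for a Hermitian positive definite
input correlation matrix `R` (hence invertible, with inverse `Rinv`), cross-correlation
vector `p` and desired-signal power `σd2`, the weight vector `w̄ = R⁻¹ p` globally
minimizes the MSE cost `J(w) = re(wᴴ R w − pᴴ w − wᴴ p) + σd2`. -/
theorem quaternion_mmse_filter (n : ℕ) (R : Matrix (Fin n) (Fin n) ℍ[ℝ])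
    (hR : Rᴴ = R) (hpd : ∀ x : Fin n → ℍ[ℝ], x ≠ 0 → 0 < (star x ⬝ᵥ R.mulVec x).re)
    (p : Fin n → ℍ[ℝ]) (σd2 : ℝ) :
    ∃ Rinv : Matrix (Fin n) (Fin n) ℍ[ℝ], R * Rinv = 1 ∧ Rinv * R = 1 ∧
      ∀ w : Fin n → ℍ[ℝ],
        (star (Rinv.mulVec p) ⬝ᵥ R.mulVec (Rinv.mulVec p)
            - star p ⬝ᵥ Rinv.mulVec p - star (Rinv.mulVec p) ⬝ᵥ p).re + σd2 ≤
          (star w ⬝ᵥ R.mulVec w - star p ⬝ᵥ w - star w ⬝ᵥ p).re + σd2 := by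
  obtain ⟨Rinv, h1, h2⟩ := quat_matrix_isUnit n R hR hpd
  refine ⟨Rinv, h1, h2, fun w => ?_⟩
  set wb := Rinv.mulVec p with hwb
  have hp : R.mulVec wb = p := by
    rw [hwb, Matrix.mulVec_mulVec, h1, Matrix.one_mulVec]
  -- rewrite star p ⬝ᵥ v as star wb ⬝ᵥ R.mulVec v
  have hsp : ∀ v : Fin n → ℍ[ℝ], star p ⬝ᵥ v = star wb ⬝ᵥ R.mulVec v := by
    intro v
    rw [← hp, Matrix.star_mulVec, hR, ← Matrix.dotProduct_mulVec]
  -- key algebraic identity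
  have key : star (w - wb) ⬝ᵥ R.mulVec (w - wb) =
      (star w ⬝ᵥ R.mulVec w - star p ⬝ᵥ w - star w ⬝ᵥ p)
        - (star wb ⬝ᵥ R.mulVec wb - star p ⬝ᵥ wb - star wb ⬝ᵥ p) := by
    rw [hsp w, hsp wb, ← hp]
    simp only [star_sub, Matrix.mulVec_sub, sub_dotProduct, dotProduct_sub]
    abel
  have hnn : 0 ≤ (star (w - wb) ⬝ᵥ R.mulVec (w - wb)).re := by
    rcases eq_or_ne (w - wb) 0 with h | h
    · rw [h]; simp
    · exact le_of_lt (hpd _ h)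
  rw [key, Quaternion.re_sub] at hnn
  linarith
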